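/- Let p and q be distinct odd prime numbers and let b be an integer with 2b² = p + q, and set a = (p − q)/2. Then the point P = (b², a·b) lies on the elliptic curve E : y² = x³ − pq·x over ℚ, and P has infinite order in the group E(ℚ); that is, n·P is not the point at infinity for every positive integer n. -/

import Mathlib

open WeierstrassCurve.Affine

namespace Stmt13Aux

/-- The curve `y² = x³ - N x`. -/
abbrev EW (N : ℚ) : WeierstrassCurve.Affine ℚ := ⟨0, 0, 0, -N, 0⟩

lemma EW_a₁ (N : ℚ) : (EW N).a₁ = 0 := rfl
lemma EW_a₂ (N : ℚ) : (EW N).a₂ = 0 := rfl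
lemma EW_a₃ (N : ℚ) : (EW N).a₃ = 0 := rfl
lemma EW_a₄ (N : ℚ) : (EW N).a₄ = -N := rfl
lemma EW_a₆ (N : ℚ) : (EW N).a₆ = 0 := rfl

lemma EW_negY (N x y : ℚ) : (EW N).negY x y = -y := by
  rw [WeierstrassCurve.Affine.negY, EW_a₁, EW_a₃]; ring

lemma curve_eqn {N x y : ℚ} (h : (EW N).Nonsingular x y) : y ^ 2 = x ^ 3 - N * x := by
  have := (WeierstrassCurve.Affine.equation_iff (W := EW N) x y).mp h.1
  rw [EW_a₁, EW_a₂, EW_a₃, EW_a₄, EW_a₆] at this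
  linarith

/-- `2*m` is not a rational square when `m` is odd. -/
lemma not_sq_two_mul (m : ℕ) (hm : Odd m) (r : ℚ) (hr : r ^ 2 = 2 * m) : False := by
  have hden : (r.den : ℚ) ≠ 0 := by exact_mod_cast r.den_nz
  have hnum : (r.num : ℚ) = r * r.den := by
    have h := Rat.num_div_den r
    rw [div_eq_iff hden] at h
    exact h
  have h1 : (r.num : ℚ) ^ 2 = 2 * m * (r.den : ℚ) ^ 2 := by
    rw [hnum]; linear_combination (r.den : ℚ) ^ 2 * hr
  have h2 : r.num ^ 2 = 2 * (m : ℤ) * (r.den : ℤ) ^ 2 := by exact_mod_cast h1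
  have heven : Even r.num := by
    have : Even (r.num ^ 2) := ⟨(m : ℤ) * (r.den : ℤ) ^ 2, by linarith⟩
    exact (Int.even_pow.mp this).1
  obtain ⟨s, hs⟩ := heven
  have h4 : 4 * s ^ 2 = 2 * (m : ℤ) * (r.den : ℤ) ^ 2 := by
    linear_combination h2 + (-(r.num + s + s)) * hs
  have hmd : Even ((m : ℤ) * (r.den : ℤ) ^ 2) := ⟨s ^ 2, by linarith⟩
  have hmodd : Odd (m : ℤ) := by exact_mod_cast hm
  have hdeneven : Even ((r.den : ℤ)) := by
    rcases Int.even_mul.mp hmd with h | h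
    · exact absurd h (by simpa using hmodd)
    · exact (Int.even_pow.mp h).1
  have h2num : 2 ∣ r.num.natAbs := (Int.natAbs_even.mpr ⟨s, hs⟩).two_dvd
  have h2den : 2 ∣ r.den := by
    have : (2 : ℤ) ∣ (r.den : ℤ) := hdeneven.two_dvd
    exact_mod_cast this
  have hg := Nat.dvd_gcd h2num h2den
  rw [r.reduced] at hg
  omega

/-- `p*q` is not a rational square when `p ≠ q` are primes. -/
lemma not_sq_mul (p q : ℕ) (hp : p.Prime) (hq : q.Prime) (hpq : p ≠ q) (r : ℚ)
    (hr : r ^ 2 = (p : ℚ) * q) : False := by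
  have hden : (r.den : ℚ) ≠ 0 := by exact_mod_cast r.den_nz
  have hnum : (r.num : ℚ) = r * r.den := by
    have h := Rat.num_div_den r
    rw [div_eq_iff hden] at h
    exact h
  have h1 : (r.num : ℚ) ^ 2 = (p : ℚ) * q * (r.den : ℚ) ^ 2 := by
    rw [hnum]; linear_combination (r.den : ℚ) ^ 2 * hr
  have h2 : r.num ^ 2 = (p : ℤ) * (q : ℤ) * (r.den : ℤ) ^ 2 := by exact_mod_cast h1
  have hpZ : Prime (p : ℤ) := Nat.prime_iff_prime_int.mp hp
  have hpdvd : (p : ℤ) ∣ r.num := by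
    refine hpZ.dvd_of_dvd_pow (n := 2) ⟨(q : ℤ) * (r.den : ℤ) ^ 2, by linarith⟩
  obtain ⟨s, hs⟩ := hpdvd
  have hp0 : (p : ℤ) ≠ 0 := by exact_mod_cast hp.pos.ne'
  have h3 : (p : ℤ) * s ^ 2 = (q : ℤ) * (r.den : ℤ) ^ 2 := by
    have h4 : (p : ℤ) * ((p : ℤ) * s ^ 2) = (p : ℤ) * ((q : ℤ) * (r.den : ℤ) ^ 2) := by
      linear_combination h2 + (-(r.num + (p : ℤ) * s)) * hs
    exact mul_left_cancel₀ hp0 h4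
  have hpq' : ¬ (p : ℤ) ∣ (q : ℤ) := by
    intro h
    exact hpq ((Nat.prime_dvd_prime_iff_eq hp hq).mp (by exact_mod_cast h))
  have hpden : (p : ℤ) ∣ (r.den : ℤ) := by
    have : (p : ℤ) ∣ (q : ℤ) * (r.den : ℤ) ^ 2 := ⟨s ^ 2, h3.symm⟩
    rcases hpZ.dvd_mul.mp this with h | h
    · exact absurd h hpq'
    · exact hpZ.dvd_of_dvd_pow h
  have h2num : p ∣ r.num.natAbs := Int.natCast_dvd.mp ⟨s, hs⟩
  have h2den : p ∣ r.den := by exact_mod_cast hpden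
  have hg := Nat.dvd_gcd h2num h2den
  rw [r.reduced] at hg
  have := Nat.le_of_dvd one_pos hg
  have := hp.two_le
  omega

/-- Coordinates of a doubling. -/
lemma double_some {N x₁ y₁ x y : ℚ} {h₁ : (EW N).Nonsingular x₁ y₁}
    {h : (EW N).Nonsingular x y}
    (hadd : Point.some _ _ h₁ + Point.some _ _ h₁ = Point.some _ _ h) :
    y₁ ≠ 0 ∧ x = ((x₁ ^ 2 + N) / (2 * y₁)) ^ 2 := by
  by_cases hy : y₁ = (EW N).negY x₁ y₁
  · exact absurd ((Point.add_self_of_Y_eq hy).symm.trans hadd).symm (Point.some_ne_zero h)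
  have hy1 : y₁ ≠ 0 := by
    intro h0
    exact hy (by rw [EW_negY, h0, neg_zero])
  have hadd2 := (Point.add_self_of_Y_ne (h₁ := h₁) hy).symm.trans hadd
  have hx : (EW N).addX x₁ x₁ ((EW N).slope x₁ x₁ y₁ y₁) = x := (Point.some.inj hadd2).1
  have hslope : (EW N).slope x₁ x₁ y₁ y₁ = (3 * x₁ ^ 2 - N) / (2 * y₁) := by
    rw [WeierstrassCurve.Affine.slope_of_Y_ne rfl hy, EW_negY, EW_a₁, EW_a₂, EW_a₄]
    ring_nf
  have heq : y₁ ^ 2 = x₁ ^ 3 - N * x₁ := curve_eqn h₁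
  refine ⟨hy1, ?_⟩
  rw [← hx, hslope, WeierstrassCurve.Affine.addX, EW_a₁, EW_a₂]
  have h2y : (2 * y₁) ≠ 0 := by simpa using hy1
  field_simp
  linear_combination (-8 * x₁) * heq

/-- If a point is a double of another point, its `x`-coordinate is positive. -/
lemma x_pos_of_double {N : ℚ} (hN : 0 < N) (R : (EW N).Point)
    {x y : ℚ} {h : (EW N).Nonsingular x y}
    (hadd : R + R = Point.some _ _ h) : 0 < x := by
  rcases R with _ | @⟨x₁, y₁, h₁⟩
  · exact absurd ((zero_add (0 : (EW N).Point)).trans hadd).symm (Point.some_ne_zero h)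
  obtain ⟨hy1, hxval⟩ := double_some hadd
  rw [hxval]
  have hnum : x₁ ^ 2 + N ≠ 0 := by positivity
  have hden : (2 : ℚ) * y₁ ≠ 0 := by simpa using hy1
  have : (x₁ ^ 2 + N) / (2 * y₁) ≠ 0 := div_ne_zero hnum hden
  positivity

end Stmt13Aux

open Stmt13Aux

set_option maxHeartbeats 1000000 in
/-- Let `p, q` be distinct odd primes, `b` an integer with `2b² = p + q`,
and `a = (p − q)/2`. Then `P = (b², a·b)` lies on `E : y² = x³ − pq·x` and has infinite
order in `E(ℚ)`. -/
theorem stmt13 (p q : ℕ) (hp : p.Prime) (hq : q.Prime) (hp2 : p ≠ 2) (hq2 : q ≠ 2)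
    (hpq : p ≠ q) (b : ℤ) (hb : 2 * b ^ 2 = (p : ℤ) + q)
    (a : ℤ) (ha : 2 * a = (p : ℤ) - q) :
    ∃ hns : WeierstrassCurve.Affine.Nonsingular
        (⟨0, 0, 0, -((p : ℚ) * q), 0⟩ : WeierstrassCurve.Affine ℚ)
        ((b : ℚ) ^ 2) ((a : ℚ) * b),
      ∀ n : ℕ, 0 < n → n • (WeierstrassCurve.Affine.Point.some _ _ hns) ≠ 0 := by
  have hb' : (2 : ℚ) * (b : ℚ) ^ 2 = (p : ℚ) + q := by exact_mod_cast hb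
  have ha' : (2 : ℚ) * (a : ℚ) = (p : ℚ) - q := by exact_mod_cast ha
  have hpv : (p : ℚ) = (b : ℚ) ^ 2 + a := by linarith
  have hqv : (q : ℚ) = (b : ℚ) ^ 2 - a := by linarith
  have hNval : (p : ℚ) * q = (b : ℚ) ^ 4 - (a : ℚ) ^ 2 := by rw [hpv, hqv]; ring
  have hppos : (0 : ℚ) < p := by exact_mod_cast hp.pos
  have hqpos : (0 : ℚ) < q := by exact_mod_cast hq.pos
  have hN : (0 : ℚ) < (p : ℚ) * q := mul_pos hppos hqpos
  have hb2pos : (0 : ℚ) < (b : ℚ) ^ 2 := by nlinarith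
  have hb0 : (b : ℚ) ≠ 0 := by
    intro h; rw [h] at hb2pos; norm_num at hb2pos
  have ha0 : (a : ℚ) ≠ 0 := by
    intro h
    apply hpq
    have : (p : ℚ) = (q : ℚ) := by rw [hpv, hqv, h]; ring
    exact_mod_cast this
  -- the point is nonsingular
  have heqP : (EW ((p : ℚ) * q)).Equation ((b : ℚ) ^ 2) ((a : ℚ) * b) := by
    rw [WeierstrassCurve.Affine.equation_iff, EW_a₁, EW_a₂, EW_a₃, EW_a₄, EW_a₆]
    linear_combination (b : ℚ) ^ 2 * hNval
  have hns : (EW ((p : ℚ) * q)).Nonsingular ((b : ℚ) ^ 2) ((a : ℚ) * b) := by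
    rw [WeierstrassCurve.Affine.nonsingular_iff]
    refine ⟨heqP, Or.inr ?_⟩
    rw [EW_a₁, EW_a₃]
    intro hcon
    have : (a : ℚ) * b = 0 := by linarith
    exact (mul_ne_zero ha0 hb0) this
  refine ⟨hns, ?_⟩
  intro n hn h0
  let N : ℚ := (p : ℚ) * q
  have hNdef : N = (p : ℚ) * q := rfl
  set P : (EW N).Point := WeierstrassCurve.Affine.Point.some _ _ hns with hPdef
  -- no point doubles to P
  have hhalfP : ∀ R : (EW N).Point, R + R ≠ P := by
    intro R hR
    rcases R with _ | @⟨x₁, y₁, h₁⟩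
    · exact Point.some_ne_zero hns ((zero_add (0 : (EW N).Point)).trans hR).symm
    obtain ⟨hy1, hxval⟩ := double_some hR
    have heq : y₁ ^ 2 = x₁ ^ 3 - N * x₁ := curve_eqn h₁
    have h2y : (2 * y₁) ≠ 0 := by simpa using hy1
    have hA : (b : ℚ) ^ 2 * (2 * y₁) ^ 2 = (x₁ ^ 2 + N) ^ 2 := by
      rw [div_pow] at hxval
      rw [eq_div_iff (pow_ne_zero 2 h2y)] at hxval
      linarith
    have hfact : (x₁ ^ 2 - 2 * p * x₁ - N) * (x₁ ^ 2 - 2 * q * x₁ - N) = 0 := by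
      rw [hNdef]
      linear_combination (-1 : ℚ) * hA + 4 * (b : ℚ) ^ 2 * heq
        + 2 * x₁ * (x₁ ^ 2 - (p : ℚ) * q) * hb'
    rcases mul_eq_zero.mp hfact with hc | hc
    · have hr2 : ((x₁ - p) / b) ^ 2 = 2 * (p : ℚ) := by
        rw [div_pow, div_eq_iff (pow_ne_zero 2 hb0)]
        rw [hNdef] at hc
        linear_combination hc - (p : ℚ) * hb'
      exact not_sq_two_mul p (hp.odd_of_ne_two hp2) _ (by exact_mod_cast hr2)
    · have hr2 : ((x₁ - q) / b) ^ 2 = 2 * (q : ℚ) := by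
        rw [div_pow, div_eq_iff (pow_ne_zero 2 hb0)]
        rw [hNdef] at hc
        linear_combination hc - (q : ℚ) * hb'
      exact not_sq_two_mul q (hq.odd_of_ne_two hq2) _ (by exact_mod_cast hr2)
  -- odd multiples give halves
  have hodd_half : ∀ (Q : (EW N).Point) (m : ℕ), Odd m → m • Q = 0 →
      ∃ R : (EW N).Point, R + R = Q := by
    intro Q m hm hmQ
    obtain ⟨t, ht⟩ := hm
    refine ⟨(t + 1) • Q, ?_⟩
    have h1 : (m + 1) • Q = Q := by rw [succ_nsmul, hmQ, zero_add]
    calc (t + 1) • Q + (t + 1) • Q = ((t + 1) + (t + 1)) • Q := (add_nsmul Q _ _).symm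
      _ = (m + 1) • Q := by congr 1; omega
      _ = Q := h1
  have hfin : IsOfFinAddOrder P := isOfFinAddOrder_iff_nsmul_eq_zero.mpr ⟨n, hn, h0⟩
  set d : ℕ := addOrderOf P with hd
  have hdpos : 0 < d := hfin.addOrderOf_pos
  have hdP : d • P = 0 := addOrderOf_nsmul_eq_zero P
  rcases Nat.even_or_odd d with hdeven | hdodd
  · -- even order
    obtain ⟨k, hk⟩ := hdeven
    have hkpos : 0 < k := by omega
    have hT2 : k • P + k • P = 0 := by
      rw [← add_nsmul, ← hk, hdP]
    have hT2ne : k • P ≠ 0 := by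
      intro h
      have hdvd := addOrderOf_dvd_of_nsmul_eq_zero h
      rw [← hd] at hdvd
      have := Nat.le_of_dvd hkpos hdvd
      omega
    rcases hkP : (k • P) with _ | @⟨x₂, y₂, h₂⟩
    · exact hT2ne (by rw [hkP]; rfl)
    rw [hkP] at hT2
    have hy2 : y₂ = (EW N).negY x₂ y₂ := by
      by_contra hy
      have hss := Point.add_self_of_Y_ne (h₁ := h₂) hy
      rw [hss] at hT2
      exact Point.some_ne_zero _ hT2
    rw [EW_negY] at hy2
    have hy20 : y₂ = 0 := by linarith
    have heq2 : y₂ ^ 2 = x₂ ^ 3 - N * x₂ := curve_eqn h₂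
    have hx2 : x₂ = 0 := by
      have hfac : x₂ * (x₂ ^ 2 - N) = 0 := by
        linear_combination (-1 : ℚ) * heq2 + y₂ * hy20
      rcases mul_eq_zero.mp hfac with h | h
      · exact h
      · exfalso
        have : x₂ ^ 2 = (p : ℚ) * q := by rw [← hNdef]; linarith
        exact not_sq_mul p q hp hq hpq x₂ this
    rcases Nat.even_or_odd k with hkeven | hkodd
    · -- k even : (0,0) is a double, contradiction
      obtain ⟨j, hj⟩ := hkeven
      have hjadd : j • P + j • P = Point.some _ _ h₂ := by rw [← add_nsmul, ← hj, hkP]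
      have := x_pos_of_double hN _ hjadd
      rw [hx2] at this
      exact lt_irrefl 0 this
    · -- k odd : P + (0,0) has negative x-coordinate yet is a double
      have hxne : (b : ℚ) ^ 2 ≠ x₂ := by rw [hx2]; exact pow_ne_zero 2 hb0
      have haddP' := Point.add_of_X_ne (h₁ := hns) (h₂ := h₂) hxne
      have hLval : (EW N).slope ((b : ℚ) ^ 2) x₂ ((a : ℚ) * b) y₂ = (a : ℚ) / b := by
        rw [WeierstrassCurve.Affine.slope_of_X_ne hxne, hx2, hy20]
        rw [sub_zero, sub_zero, pow_two]
        rw [mul_comm (a : ℚ) (b : ℚ), mul_div_mul_left _ _ hb0]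
      have hx'val : (EW N).addX ((b : ℚ) ^ 2) x₂
          ((EW N).slope ((b : ℚ) ^ 2) x₂ ((a : ℚ) * b) y₂)
          = ((a : ℚ) ^ 2 - (b : ℚ) ^ 4) / (b : ℚ) ^ 2 := by
        rw [hLval, WeierstrassCurve.Affine.addX, EW_a₁, EW_a₂, hx2]
        field_simp
        ring
      have hx'neg : (EW N).addX ((b : ℚ) ^ 2) x₂
          ((EW N).slope ((b : ℚ) ^ 2) x₂ ((a : ℚ) * b) y₂) < 0 := by
        rw [hx'val]
        apply div_neg_of_neg_of_pos
        · nlinarith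
        · positivity
      have hP'2 : P + Point.some _ _ h₂ = (k + 1) • P := by
        rw [succ_nsmul, ← hkP, add_comm]
      obtain ⟨t, ht2⟩ := (Nat.even_add_one.mpr (Nat.not_even_iff_odd.mpr hkodd))
      have hkP' : k • ((k + 1) • P) = 0 := by
        rw [smul_smul]
        have hmul : k * (k + 1) = t * d := by rw [hk, ht2]; ring
        rw [hmul, mul_smul, hdP]
        exact nsmul_zero t
      obtain ⟨R, hR⟩ := hodd_half _ k hkodd hkP'
      rw [← hP'2, haddP'] at hR
      have := x_pos_of_double hN R hR
      rw [hx'val] at this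
      have hneg : ((a : ℚ) ^ 2 - (b : ℚ) ^ 4) / (b : ℚ) ^ 2 < 0 := by
        apply div_neg_of_neg_of_pos
        · nlinarith
        · positivity
      linarith
  · -- odd order : P itself is a double
    obtain ⟨R, hR⟩ := hodd_half P d hdodd hdP
    exact hhalfP R hR
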